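/- For every integer d ≥ 1, the polynomial P(t, λ) = ∏_{i=1}^{d} (t + λ_i) − 2 Σ_{i=1}^{d} λ_i ∏_{k≠i} (t + λ_k), regarded as a univariate polynomial in t with coefficients in the field ℚ(λ₁, …, λ_d) of rational functions in d indeterminates over ℚ, is irreducible. -/

import Mathlib

/-! Irreducibility over `ℚ(λ₁, …, λ_d)` of the polynomial
`P(t, λ) = ∏ᵢ (t + λᵢ) - 2 ∑ᵢ λᵢ ∏_{k ≠ i} (t + λₖ)`. -/

/-- The image of the indeterminate `λ_i` in the rational function field
`ℚ(λ₁, …, λ_d)`. -/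
noncomputable def lamVar (d : ℕ) (i : Fin d) : FractionRing (MvPolynomial (Fin d) ℚ) :=
  algebraMap (MvPolynomial (Fin d) ℚ) (FractionRing (MvPolynomial (Fin d) ℚ))
    (MvPolynomial.X i)

/-- The polynomial `P(t, λ) = ∏ᵢ (t + λᵢ) - 2 ∑ᵢ λᵢ ∏_{k ≠ i} (t + λₖ)` as an element of
`ℚ(λ₁, …, λ_d)[t]`. -/
noncomputable def PPoly (d : ℕ) : Polynomial (FractionRing (MvPolynomial (Fin d) ℚ)) :=
  (∏ i : Fin d, (Polynomial.X + Polynomial.C (lamVar d i))) -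
    2 * ∑ i : Fin d, Polynomial.C (lamVar d i) *
      ∏ k ∈ Finset.univ.erase i, (Polynomial.X + Polynomial.C (lamVar d k))

namespace PPolyAux

open Polynomial Finset

noncomputable section

/-! ### A swap automorphism of `A[X][Y]` exchanging the two variables -/

variable {A : Type*} [CommRing A]

/-- The ring endomorphism of `A[X][Y]` swapping the two polynomial variables. -/
def swapHom (A : Type*) [CommRing A] :
    Polynomial (Polynomial A) →+* Polynomial (Polynomial A) :=
  eval₂RingHom (eval₂RingHom (C.comp C) X) (C X)

@[simp] lemma swapHom_X : swapHom A X = C X := by simp [swapHom]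

@[simp] lemma swapHom_CX : swapHom A (C X) = X := by
  simp [swapHom, eval₂_C]

@[simp] lemma swapHom_CC (a : A) : swapHom A (C (C a)) = C (C a) := by
  simp [swapHom, eval₂_C]

lemma swapHom_swapHom (p : Polynomial (Polynomial A)) :
    swapHom A (swapHom A p) = p := by
  have h : (swapHom A).comp (swapHom A) = RingHom.id _ := by
    apply Polynomial.ringHom_ext'
    · apply Polynomial.ringHom_ext'
      · ext a
        simp
      · simp
    · simp
  calc swapHom A (swapHom A p) = ((swapHom A).comp (swapHom A)) p := rfl
    _ = p := by rw [h]; rfl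

/-- The swap as a ring equivalence. -/
def swapEquiv (A : Type*) [CommRing A] :
    Polynomial (Polynomial A) ≃+* Polynomial (Polynomial A) where
  toFun := swapHom A
  invFun := swapHom A
  left_inv := swapHom_swapHom
  right_inv := swapHom_swapHom
  map_mul' := map_mul _
  map_add' := map_add _

@[simp] lemma swapEquiv_apply (p : Polynomial (Polynomial A)) :
    swapEquiv A p = swapHom A p := rfl

lemma sum_factor {R : Type*} [CommRing R] {ι : Type*} (u : R) (c p : ι → R) (s : Finset ι) :
    ∑ j ∈ s, c j * (u * p j) = u * ∑ j ∈ s, c j * p j := by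
  rw [Finset.mul_sum]
  exact Finset.sum_congr rfl fun j _ => by ring

/-! ### Irreducibility of linear polynomials over a domain -/

theorem irreducible_linear {R : Type*} [CommRing R] [IsDomain R] {a b : R}
    (hb : b ≠ 0) (h : ∀ r : R, r ∣ a → r ∣ b → IsUnit r) :
    Irreducible (C a + C b * X) := by
  have hdeg : (C a + C b * X).degree = 1 := by
    rw [add_comm]; exact degree_linear hb
  have hne : (C a + C b * X) ≠ 0 := fun h0 => by simp [h0] at hdeg
  have coeff0 : (C a + C b * X).coeff 0 = a := by simp
  have coeff1 : (C a + C b * X).coeff 1 = b := by simp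
  constructor
  · intro hu
    have := degree_eq_zero_of_isUnit hu
    rw [hdeg] at this
    exact one_ne_zero this
  · intro f g hfg
    have hf0 : f ≠ 0 := fun h0 => hne (by rw [hfg, h0, zero_mul])
    have hg0 : g ≠ 0 := fun h0 => hne (by rw [hfg, h0, mul_zero])
    have hnd : f.natDegree + g.natDegree = 1 := by
      have h1 : (C a + C b * X).natDegree = 1 := natDegree_eq_of_degree_eq_some hdeg
      rw [← h1, hfg, natDegree_mul hf0 hg0]
    rcases Nat.add_eq_one_iff.mp hnd with ⟨hf, _⟩ | ⟨_, hg⟩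
    · left
      obtain ⟨c, rfl⟩ : ∃ c, f = C c := ⟨f.coeff 0, eq_C_of_natDegree_eq_zero hf⟩
      have ha : c ∣ a := ⟨g.coeff 0, by rw [← coeff0, hfg, coeff_C_mul]⟩
      have hbd : c ∣ b := ⟨g.coeff 1, by rw [← coeff1, hfg, coeff_C_mul]⟩
      exact (isUnit_C).mpr (h c ha hbd)
    · right
      obtain ⟨c, rfl⟩ : ∃ c, g = C c := ⟨g.coeff 0, eq_C_of_natDegree_eq_zero hg⟩
      have ha : c ∣ a := ⟨f.coeff 0, by rw [← coeff0, hfg, coeff_mul_C, mul_comm]⟩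
      have hbd : c ∣ b := ⟨f.coeff 1, by rw [← coeff1, hfg, coeff_mul_C, mul_comm]⟩
      exact (isUnit_C).mpr (h c ha hbd)

/-! ### The polynomials `Q`, `W`, `S`, `T` over `ℚ[λ₁,…,λ_n][t]` -/

variable (n : ℕ)

/-- `Q = ∏ⱼ (t + λⱼ)`. -/
def Qp : Polynomial (MvPolynomial (Fin n) ℚ) :=
  ∏ j : Fin n, (X + C (MvPolynomial.X j))

/-- `W = ∑ⱼ λⱼ ∏_{k ≠ j} (t + λₖ)`. -/
def Wp : Polynomial (MvPolynomial (Fin n) ℚ) :=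
  ∑ j : Fin n, C (MvPolynomial.X j) *
    ∏ k ∈ Finset.univ.erase j, (X + C (MvPolynomial.X k))

def Sp : Polynomial (MvPolynomial (Fin n) ℚ) := X * Qp n - 2 * (X * Wp n)

def Tp : Polynomial (MvPolynomial (Fin n) ℚ) := -Qp n - 2 * Wp n

lemma eval_zero_Tp : (Tp n).eval 0 =
    -(((2 * n + 1 : ℕ) : MvPolynomial (Fin n) ℚ) * ∏ j : Fin n, MvPolynomial.X j) := by
  have hQ : (Qp n).eval 0 = ∏ j : Fin n, MvPolynomial.X j := by
    simp [Qp, eval_prod]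
  have hW : (Wp n).eval 0 = (n : MvPolynomial (Fin n) ℚ) * ∏ j : Fin n, MvPolynomial.X j := by
    rw [Wp, eval_finset_sum]
    have hterm : ∀ j : Fin n, (C (MvPolynomial.X j) *
        ∏ k ∈ Finset.univ.erase j, (X + C (MvPolynomial.X k))).eval 0 =
        (∏ j : Fin n, MvPolynomial.X j : MvPolynomial (Fin n) ℚ) := by
      intro j
      rw [eval_mul, eval_C, eval_prod]
      simp only [eval_add, eval_X, eval_C, zero_add]
      exact Finset.mul_prod_erase _ _ (mem_univ j)
    rw [Finset.sum_congr rfl fun j _ => hterm j, Finset.sum_const, card_univ,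
      Fintype.card_fin, nsmul_eq_mul]
  have h2 : (Tp n).eval 0 = -(Qp n).eval 0 - 2 * (Wp n).eval 0 := by
    rw [Tp]; simp [eval_sub, eval_neg, eval_mul]
  rw [h2, hQ, hW]
  push_cast
  ring

lemma eval_zero_Tp_ne : (Tp n).eval 0 ≠ 0 := by
  rw [eval_zero_Tp]
  rw [neg_ne_zero]
  apply mul_ne_zero
  · exact Nat.cast_ne_zero.mpr (by omega)
  · exact Finset.prod_ne_zero_iff.mpr fun j _ => MvPolynomial.X_ne_zero j

lemma Tp_ne_zero : Tp n ≠ 0 := fun h => eval_zero_Tp_ne n (by rw [h, eval_zero])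

lemma eval_neg_Tp (j : Fin n) : (Tp n).eval (-(MvPolynomial.X j)) ≠ 0 := by
  have hQ : (Qp n).eval (-(MvPolynomial.X j)) = 0 := by
    rw [Qp, eval_prod]
    apply Finset.prod_eq_zero (mem_univ j)
    simp
  have hW : (Wp n).eval (-(MvPolynomial.X j)) =
      MvPolynomial.X j *
        ∏ k ∈ Finset.univ.erase j, (-(MvPolynomial.X j) + MvPolynomial.X k) := by
    rw [Wp, eval_finset_sum]
    rw [Finset.sum_eq_single j ?_ (fun h => absurd (mem_univ j) h)]
    · rw [eval_mul, eval_C, eval_prod]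
      simp only [eval_add, eval_X, eval_C]
    · intro m _ hmj
      rw [eval_mul, eval_prod]
      apply mul_eq_zero_of_right
      apply Finset.prod_eq_zero (Finset.mem_erase.mpr ⟨Ne.symm hmj, mem_univ j⟩)
      simp
  have h2 : (Tp n).eval (-(MvPolynomial.X j)) =
      -(Qp n).eval (-(MvPolynomial.X j)) - 2 * (Wp n).eval (-(MvPolynomial.X j)) := by
    rw [Tp]; simp [eval_sub, eval_neg, eval_mul]
  rw [h2, hQ, hW, neg_zero, zero_sub, neg_ne_zero]
  apply mul_ne_zero
  · exact two_ne_zero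
  apply mul_ne_zero (MvPolynomial.X_ne_zero j)
  apply Finset.prod_ne_zero_iff.mpr
  intro k hk
  rw [neg_add_eq_sub, sub_ne_zero]
  exact fun h => (Finset.mem_erase.mp hk).1 (MvPolynomial.X_injective h)

lemma two_isUnit : IsUnit (2 : Polynomial (MvPolynomial (Fin n) ℚ)) := by
  have h2 : IsUnit (2 : ℚ) := by norm_num
  have := h2.map ((Polynomial.C (R := MvPolynomial (Fin n) ℚ)).comp
    (MvPolynomial.C (σ := Fin n) (R := ℚ)))
  rwa [map_ofNat] at this

lemma coprime_Sp_Tp (r : Polynomial (MvPolynomial (Fin n) ℚ))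
    (hS : r ∣ Sp n) (hT : r ∣ Tp n) : IsUnit r := by
  by_contra hu
  have hr0 : r ≠ 0 := fun h0 => Tp_ne_zero n (zero_dvd_iff.mp (h0 ▸ hT))
  obtain ⟨π, hπirr, hπr⟩ := WfDvdMonoid.exists_irreducible_factor hu hr0
  have hπp : Prime π := UniqueFactorizationMonoid.irreducible_iff_prime.mp hπirr
  have hπT : π ∣ Tp n := hπr.trans hT
  have hπS : π ∣ Sp n := hπr.trans hS
  have key : π ∣ X * (2 * Qp n) := by
    have hid : Sp n - X * Tp n = X * (2 * Qp n) := by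
      rw [Sp, Tp]; ring
    rw [← hid]
    exact dvd_sub hπS (hπT.mul_left X)
  rcases hπp.dvd_mul.mp key with hX | h2Q
  · have hXdvd : (X : Polynomial (MvPolynomial (Fin n) ℚ)) ∣ Tp n :=
      ((hπirr.associated_of_dvd prime_X.irreducible hX).symm.dvd).trans hπT
    have := X_dvd_iff.mp hXdvd
    rw [coeff_zero_eq_eval_zero] at this
    exact eval_zero_Tp_ne n this
  · rcases hπp.dvd_mul.mp h2Q with h2 | hQ
    · exact hπp.not_unit (isUnit_of_dvd_unit h2 (two_isUnit n))
    · obtain ⟨j, -, hj⟩ := hπp.exists_mem_finset_dvd hQ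
      have hform : X + C (MvPolynomial.X j) = (X : Polynomial (MvPolynomial (Fin n) ℚ)) - C (-(MvPolynomial.X j)) := by
        rw [map_neg, sub_neg_eq_add]
      have hprime : Prime ((X : Polynomial (MvPolynomial (Fin n) ℚ)) - C (-(MvPolynomial.X j))) := prime_X_sub_C _
      rw [hform] at hj
      have hassoc : Associated π (X - C (-(MvPolynomial.X j))) :=
        hπirr.associated_of_dvd hprime.irreducible hj
      have hdvd : (X - C (-(MvPolynomial.X j))) ∣ Tp n := hassoc.symm.dvd.trans hπT
      have := dvd_iff_isRoot.mp hdvd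
      exact eval_neg_Tp n j this

/-! ### The polynomial `P` over `ℚ[λ₀,…,λ_n][t]` and its image under the swap -/

/-- `P(t, λ)` with coefficients in the polynomial ring `ℚ[λ₀, …, λ_n]`. -/
def Pamb : Polynomial (MvPolynomial (Fin (n + 1)) ℚ) :=
  (∏ i : Fin (n + 1), (X + C (MvPolynomial.X i))) -
    2 * ∑ i : Fin (n + 1), C (MvPolynomial.X i) *
      ∏ k ∈ Finset.univ.erase i, (X + C (MvPolynomial.X k))

/-- The composite isomorphism `ℚ[λ₀,…,λ_n][t] ≃ (ℚ[λ₁,…,λ_n][t])[λ₀]`. -/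
def theta : Polynomial (MvPolynomial (Fin (n + 1)) ℚ) ≃+*
    Polynomial (Polynomial (MvPolynomial (Fin n) ℚ)) :=
  (Polynomial.mapEquiv (MvPolynomial.finSuccEquiv ℚ n).toRingEquiv).trans
    (swapEquiv (MvPolynomial (Fin n) ℚ))

lemma theta_X : theta n (X : Polynomial (MvPolynomial (Fin (n + 1)) ℚ)) = C X := by
  simp [theta, RingEquiv.trans_apply, Polynomial.mapEquiv_apply, Polynomial.map_X]

lemma theta_C (b : MvPolynomial (Fin (n + 1)) ℚ) :
    theta n (C b) = swapHom _ (C (MvPolynomial.finSuccEquiv ℚ n b)) := by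
  simp [theta, RingEquiv.trans_apply, Polynomial.mapEquiv_apply, Polynomial.map_C]

lemma theta_C0 : theta n (C (MvPolynomial.X 0)) = X := by
  rw [theta_C, MvPolynomial.finSuccEquiv_X_zero, swapHom_CX]

lemma theta_CS (j : Fin n) :
    theta n (C (MvPolynomial.X j.succ)) = C (C (MvPolynomial.X j)) := by
  rw [theta_C, MvPolynomial.finSuccEquiv_X_succ, swapHom_CC]

lemma theta_Pamb : theta n (Pamb n) = C (Sp n) + C (Tp n) * X := by
  have h0notmem : ∀ s : Finset (Fin n),
      (0 : Fin (n + 1)) ∉ s.map ⟨Fin.succ, Fin.succ_injective n⟩ := by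
    intro s hmem
    obtain ⟨j, -, hj⟩ := Finset.mem_map.mp hmem
    exact Fin.succ_ne_zero j hj
  have e0 : (Finset.univ : Finset (Fin (n + 1))).erase 0 =
      Finset.univ.map ⟨Fin.succ, Fin.succ_injective n⟩ := by
    rw [Fin.univ_succ, Finset.erase_cons]
  have es : ∀ j : Fin n, (Finset.univ : Finset (Fin (n + 1))).erase j.succ =
      insert (0 : Fin (n + 1))
        ((Finset.univ.erase j).map ⟨Fin.succ, Fin.succ_injective n⟩) := by
    intro j
    rw [Fin.univ_succ, Finset.erase_cons_of_ne _ (Fin.succ_ne_zero j).symm,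
      Finset.cons_eq_insert]
    congr 1
    exact (Finset.map_erase _ _ _).symm
  have split : Pamb n =
      (X + C (MvPolynomial.X 0)) * ∏ j : Fin n, (X + C (MvPolynomial.X j.succ))
      - 2 * (C (MvPolynomial.X 0) * ∏ j : Fin n, (X + C (MvPolynomial.X j.succ))
          + ∑ j : Fin n, C (MvPolynomial.X j.succ) *
              ((X + C (MvPolynomial.X 0)) *
                ∏ k ∈ Finset.univ.erase j, (X + C (MvPolynomial.X k.succ)))) := by
    have h1 : (∏ k ∈ (Finset.univ : Finset (Fin (n + 1))).erase 0,
        (X + C (MvPolynomial.X k)) : Polynomial (MvPolynomial (Fin (n + 1)) ℚ)) =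
        ∏ j : Fin n, (X + C (MvPolynomial.X j.succ)) := by
      rw [e0, Finset.prod_map]
      rfl
    have h2 : ∀ j : Fin n, (∏ k ∈ (Finset.univ : Finset (Fin (n + 1))).erase j.succ,
        (X + C (MvPolynomial.X k)) : Polynomial (MvPolynomial (Fin (n + 1)) ℚ)) =
        (X + C (MvPolynomial.X 0)) *
          ∏ k ∈ Finset.univ.erase j, (X + C (MvPolynomial.X k.succ)) := by
      intro j
      rw [es j, Finset.prod_insert (h0notmem _), Finset.prod_map]
      rfl
    rw [Pamb, Fin.prod_univ_succ, Fin.sum_univ_succ]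
    simp only [h1, h2]
  rw [split]
  simp only [map_sub, map_mul, map_add, map_ofNat, map_sum, map_prod,
    theta_X, theta_C0, theta_CS]
  rw [Sp, Tp, Qp, Wp]
  simp only [map_sub, map_neg, map_mul, map_add, map_ofNat, map_sum, map_prod]
  rw [sum_factor (C (X : Polynomial (MvPolynomial (Fin n) ℚ)) + X)
    (fun j => (C (C (MvPolynomial.X j)) : Polynomial (Polynomial (MvPolynomial (Fin n) ℚ))))
    (fun j => ∏ k ∈ Finset.univ.erase j,
      ((C X : Polynomial (Polynomial (MvPolynomial (Fin n) ℚ))) + C (C (MvPolynomial.X k))))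
    Finset.univ]
  ring

lemma monic_Pamb : (Pamb n).Monic := by
  rw [Pamb, sub_eq_add_neg]
  have hmon : (∏ i : Fin (n + 1), (X + C (MvPolynomial.X i)) :
      Polynomial (MvPolynomial (Fin (n + 1)) ℚ)).Monic :=
    monic_prod_of_monic _ _ fun i _ => monic_X_add_C _
  apply hmon.add_of_left
  have hdeg1 : (∏ i : Fin (n + 1), (X + C (MvPolynomial.X i)) :
      Polynomial (MvPolynomial (Fin (n + 1)) ℚ)).degree = ((n + 1 : ℕ) : WithBot ℕ) := by
    rw [degree_prod]
    simp [degree_X_add_C]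
  rw [hdeg1, degree_neg]
  have hC2 : (2 : Polynomial (MvPolynomial (Fin (n + 1)) ℚ)) = C 2 := (map_ofNat C 2).symm
  have hterm : ∀ i : Fin (n + 1), (C (MvPolynomial.X i) *
      ∏ k ∈ Finset.univ.erase i, (X + C (MvPolynomial.X k)) :
      Polynomial (MvPolynomial (Fin (n + 1)) ℚ)).degree ≤ (n : WithBot ℕ) := by
    intro i
    have hprod : (∏ k ∈ Finset.univ.erase i, (X + C (MvPolynomial.X k)) :
        Polynomial (MvPolynomial (Fin (n + 1)) ℚ)).degree = (n : WithBot ℕ) := by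
      rw [degree_prod]
      rw [Finset.sum_congr rfl fun k _ => degree_X_add_C (MvPolynomial.X k)]
      simp [Finset.card_erase_of_mem]
    refine (degree_mul_le _ _).trans ?_
    rw [hprod]
    refine le_trans (add_le_add degree_C_le le_rfl) ?_
    rw [zero_add]
  have hsum : (∑ i : Fin (n + 1), C (MvPolynomial.X i) *
      ∏ k ∈ Finset.univ.erase i, (X + C (MvPolynomial.X k)) :
      Polynomial (MvPolynomial (Fin (n + 1)) ℚ)).degree ≤ (n : WithBot ℕ) :=
    (degree_sum_le _ _).trans (Finset.sup_le fun i _ => hterm i)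
  refine lt_of_le_of_lt ?_ (show ((n : ℕ) : WithBot ℕ) < ((n + 1 : ℕ) : WithBot ℕ) by
    exact_mod_cast Nat.lt_succ_self n)
  refine (degree_mul_le _ _).trans ?_
  refine le_trans (add_le_add (hC2 ▸ degree_C_le) hsum) ?_
  rw [zero_add]

set_option maxHeartbeats 1000000 in
set_option synthInstance.maxHeartbeats 400000 in
lemma map_Pamb : (Pamb n).map
    (algebraMap (MvPolynomial (Fin (n + 1)) ℚ)
      (FractionRing (MvPolynomial (Fin (n + 1)) ℚ))) = PPoly (n + 1) := by
  rw [Pamb, PPoly]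
  simp only [Polynomial.map_sub, Polynomial.map_mul, Polynomial.map_prod, Polynomial.map_sum,
    Polynomial.map_add, Polynomial.map_X, Polynomial.map_C, Polynomial.map_ofNat]
  rfl

lemma irreducible_Pamb : Irreducible (Pamb n) := by
  have h2 : Irreducible (theta n (Pamb n)) := by
    rw [theta_Pamb]
    exact irreducible_linear (Tp_ne_zero n) (coprime_Sp_Tp n)
  exact (MulEquiv.irreducible_iff (theta n).toMulEquiv).mp h2

end

end PPolyAux

set_option maxHeartbeats 1000000 in
set_option synthInstance.maxHeartbeats 400000 in
/-- `P(t, λ)` is irreducible over `ℚ(λ₁, …, λ_d)`. -/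
theorem PPoly_irreducible (d : ℕ) (hd : 1 ≤ d) : Irreducible (PPoly d) := by
  obtain ⟨n, rfl⟩ : ∃ n, d = n + 1 := ⟨d - 1, by omega⟩
  rw [← PPolyAux.map_Pamb n]
  exact (Polynomial.Monic.irreducible_iff_irreducible_map_fraction_map
    (K := FractionRing (MvPolynomial (Fin (n + 1)) ℚ))
    (PPolyAux.monic_Pamb n)).mp (PPolyAux.irreducible_Pamb n)
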